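/- For δ > 0, define Φ(s) = I_1(s)·(I_3(s) + I_1(s)·(1 + δ/2)) / I_2(s)². Then Φ(s) → 1 as s → +∞. -/

import Mathlib

open MeasureTheory Real Filter

noncomputable def In (n : ℕ) (s : ℝ) : ℝ :=
  ∫ z in Set.Ioi (0 : ℝ), z ^ n * Real.exp (-(z - s) ^ 2)

noncomputable def Phi (δ : ℝ) (s : ℝ) : ℝ :=
  In 1 s * (In 3 s + In 1 s * (1 + δ / 2)) / (In 2 s) ^ 2

lemma In_shift (n : ℕ) (s : ℝ) :
    In n s = ∫ u, (Set.Ioi (-s)).indicator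
      (fun u => (u + s) ^ n * Real.exp (-u ^ 2)) u := by
  unfold In
  rw [← integral_indicator measurableSet_Ioi,
    ← integral_add_right_eq_self
      (fun z => (Set.Ioi (0 : ℝ)).indicator
        (fun z => z ^ n * Real.exp (-(z - s) ^ 2)) z) s]
  congr 1
  funext u
  by_cases h : u ∈ Set.Ioi (-s)
  · have h' : u + s ∈ Set.Ioi (0 : ℝ) := by
      simp only [Set.mem_Ioi] at h ⊢; linarith
    rw [Set.indicator_of_mem h', Set.indicator_of_mem h]
    ring_nf
  · have h' : u + s ∉ Set.Ioi (0 : ℝ) := by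
      simp only [Set.mem_Ioi] at h ⊢; linarith
    rw [Set.indicator_of_notMem h', Set.indicator_of_notMem h]

lemma one_add_abs_pow_le (a : ℝ) (ha : 0 ≤ a) (n : ℕ) :
    (1 + a) ^ n ≤ 2 ^ n * (1 + a ^ n) := by
  rcases le_total a 1 with h | h
  · calc (1 + a) ^ n ≤ 2 ^ n := by
          apply pow_le_pow_left₀ (by linarith) (by linarith)
    _ ≤ 2 ^ n * (1 + a ^ n) := by
          nlinarith [pow_nonneg ha n, pow_pos (zero_lt_two (α := ℝ)) n]
  · calc (1 + a) ^ n ≤ (2 * a) ^ n := by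
          apply pow_le_pow_left₀ (by linarith) (by linarith)
    _ = 2 ^ n * a ^ n := by rw [mul_pow]
    _ ≤ 2 ^ n * (1 + a ^ n) := by
          nlinarith [pow_pos (zero_lt_two (α := ℝ)) n]

lemma integrable_bound (n : ℕ) :
    Integrable (fun u : ℝ => 2 ^ n * ((1 + |u| ^ n) * Real.exp (-u ^ 2))) := by
  have h1 : Integrable (fun u : ℝ => u ^ n * Real.exp (-u ^ 2)) := by
    have := integrable_rpow_mul_exp_neg_mul_sq (b := 1) one_pos
      (s := (n : ℝ)) (lt_of_lt_of_le neg_one_lt_zero (Nat.cast_nonneg n))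
    simpa [Real.rpow_natCast] using this
  have h2 : Integrable (fun u : ℝ => |u| ^ n * Real.exp (-u ^ 2)) := by
    have := h1.abs
    refine this.congr ?_
    filter_upwards with u
    rw [abs_mul, abs_pow, abs_of_nonneg (Real.exp_pos _).le]
  have h3 : Integrable (fun u : ℝ => Real.exp (-u ^ 2)) := by
    simpa using integrable_exp_neg_mul_sq (b := 1) one_pos
  have h4 : Integrable (fun u : ℝ => (1 + |u| ^ n) * Real.exp (-u ^ 2)) := by
    have := h3.add h2
    refine this.congr ?_
    filter_upwards with u
    simp only [Pi.add_apply]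
    ring
  exact h4.const_mul _

lemma In_div_tendsto (n : ℕ) :
    Tendsto (fun s => In n s / s ^ n) atTop (nhds (Real.sqrt π)) := by
  set bound : ℝ → ℝ := fun u => 2 ^ n * ((1 + |u| ^ n) * Real.exp (-u ^ 2)) with hbdef
  set F : ℝ → ℝ → ℝ := fun s u => (Set.Ioi (-s)).indicator
    (fun u => ((u + s) ^ n / s ^ n) * Real.exp (-u ^ 2)) u with hFdef
  have hF_meas : ∀ᶠ s in atTop, AEStronglyMeasurable (F s) volume := by
    filter_upwards with s
    apply (Measurable.indicator ?_ measurableSet_Ioi).aestronglyMeasurable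
    fun_prop
  have h_bound : ∀ᶠ s in atTop, ∀ᵐ u : ℝ, ‖F s u‖ ≤ bound u := by
    filter_upwards [eventually_ge_atTop (1 : ℝ)] with s hs
    filter_upwards with u
    by_cases h : u ∈ Set.Ioi (-s)
    · rw [hFdef]
      simp only [Set.indicator_of_mem h]
      have hs0 : (0 : ℝ) < s := lt_of_lt_of_le one_pos hs
      have hmem : -s < u := h
      have key : |(u + s) ^ n / s ^ n| ≤ (1 + |u|) ^ n := by
        rw [← div_pow, abs_pow]
        apply pow_le_pow_left₀ (abs_nonneg _)
        rw [abs_div, abs_of_pos hs0]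
        rw [div_le_iff₀ hs0]
        have h1 : |u + s| ≤ |u| + s := by
          calc |u + s| ≤ |u| + |s| := abs_add_le _ _
          _ = |u| + s := by rw [abs_of_pos hs0]
        calc |u + s| ≤ |u| + s := h1
        _ ≤ (1 + |u|) * s := by nlinarith [abs_nonneg u]
      calc ‖(u + s) ^ n / s ^ n * Real.exp (-u ^ 2)‖
          = |(u + s) ^ n / s ^ n| * Real.exp (-u ^ 2) := by
            rw [norm_mul, Real.norm_eq_abs, Real.norm_eq_abs,
              abs_of_nonneg (Real.exp_pos _).le]
      _ ≤ (1 + |u|) ^ n * Real.exp (-u ^ 2) := by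
            apply mul_le_mul_of_nonneg_right key (Real.exp_pos _).le
      _ ≤ (2 ^ n * (1 + |u| ^ n)) * Real.exp (-u ^ 2) := by
            apply mul_le_mul_of_nonneg_right
              (one_add_abs_pow_le |u| (abs_nonneg u) n) (Real.exp_pos _).le
      _ = bound u := by rw [hbdef]; ring
    · rw [hFdef]
      simp only [Set.indicator_of_notMem h, norm_zero, hbdef]
      positivity
  have h_lim : ∀ᵐ u : ℝ, Tendsto (fun s => F s u) atTop
      (nhds (Real.exp (-u ^ 2))) := by
    filter_upwards with u
    have h1 : Tendsto (fun s : ℝ => (u + s) / s) atTop (nhds 1) := by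
      have h0 : Tendsto (fun s : ℝ => u / s + 1) atTop (nhds (0 + 1)) :=
        (Tendsto.div_atTop tendsto_const_nhds tendsto_id).add tendsto_const_nhds
      rw [zero_add] at h0
      apply h0.congr'
      filter_upwards [eventually_gt_atTop (0 : ℝ)] with s hs
      field_simp
    have h2 : Tendsto (fun s : ℝ => ((u + s) / s) ^ n * Real.exp (-u ^ 2))
        atTop (nhds (1 ^ n * Real.exp (-u ^ 2))) :=
      (h1.pow n).mul_const _
    rw [one_pow, one_mul] at h2
    apply h2.congr'
    filter_upwards [eventually_gt_atTop (-u)] with s hs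
    rw [hFdef]
    have hmem : u ∈ Set.Ioi (-s) := by simp only [Set.mem_Ioi]; linarith
    simp only [Set.indicator_of_mem hmem, div_pow]
  have key := tendsto_integral_filter_of_dominated_convergence (μ := volume)
    (F := F) (f := fun u => Real.exp (-u ^ 2)) bound hF_meas h_bound
    (integrable_bound n) h_lim
  have hint : ∫ u : ℝ, Real.exp (-u ^ 2) = Real.sqrt π := by
    have := integral_gaussian 1
    simpa using this
  rw [hint] at key
  apply key.congr'
  filter_upwards [eventually_ge_atTop (1 : ℝ)] with s hs
  rw [hFdef]
  rw [integral_indicator measurableSet_Ioi, In_shift,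
    integral_indicator measurableSet_Ioi]
  have : (fun u => (u + s) ^ n / s ^ n * Real.exp (-u ^ 2))
      = fun u => ((u + s) ^ n * Real.exp (-u ^ 2)) / s ^ n := by
    funext u; ring
  rw [this, integral_div]

set_option maxHeartbeats 1000000 in
theorem Phi_limit_atTop (δ : ℝ) (hδ : 0 < δ) :
    Tendsto (fun s => Phi δ s) atTop (nhds 1) := by
  have h1 := In_div_tendsto 1
  have h2 := In_div_tendsto 2
  have h3 := In_div_tendsto 3
  have hsq : Real.sqrt π ≠ 0 := by positivity
  have hzero : Tendsto (fun s : ℝ => (s ^ 2)⁻¹) atTop (nhds 0) :=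
    (tendsto_pow_atTop (two_ne_zero)).inv_tendsto_atTop
  have hmain : Tendsto (fun s => (In 1 s / s ^ 1) *
      (In 3 s / s ^ 3 + (In 1 s / s ^ 1) * (1 + δ / 2) * (s ^ 2)⁻¹) /
      (In 2 s / s ^ 2) ^ 2) atTop
      (nhds (Real.sqrt π * (Real.sqrt π + Real.sqrt π * (1 + δ / 2) * 0) /
        (Real.sqrt π) ^ 2)) := by
    exact Tendsto.div (h1.mul (h3.add ((h1.mul_const _).mul hzero))) (h2.pow 2)
      (by positivity)
  have heq : Real.sqrt π * (Real.sqrt π + Real.sqrt π * (1 + δ / 2) * 0) /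
      (Real.sqrt π) ^ 2 = 1 := by
    rw [mul_zero, add_zero, sq, div_self (by positivity)]
  rw [heq] at hmain
  apply hmain.congr'
  filter_upwards [eventually_gt_atTop (0 : ℝ)] with s hs
  unfold Phi
  rcases eq_or_ne (In 2 s) 0 with h2z | h2z
  · simp [h2z, zero_div, zero_pow, div_zero]
  · have hs0 : s ≠ 0 := ne_of_gt hs
    set a := In 1 s with ha
    set b := In 2 s with hb
    set c := In 3 s with hc
    clear_value a b c
    field_simp
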